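/- Let N ≥ 2 and let H be the NW×NW symmetric block-tridiagonal matrix with diagonal blocks A₁,…,A_N and off-diagonal blocks B₁,…,B_{N-1} (each W×W, with A_i symmetric). Fix E ∈ ℝ and define D₁ = A₁ - E and D_{j+1} = A_{j+1} - E - B_j^* D_j^{-1} B_j for 1 ≤ j ≤ N-1. Assume H - E and all D_j are invertible. Then the (1,N) block of (H-E)^{-1} equals (-1)^{N-1} D₁^{-1} B₁ D₂^{-1} B₂ ⋯ B_{N-1} D_N^{-1}. -/
import Mathlib

open Matrix

private noncomputable def Qaux (W : ℕ) (D B : ℕ → Matrix (Fin W) (Fin W) ℝ) (n : ℕ) :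
    ℕ → Matrix (Fin W) (Fin W) ℝ
  | 0 => (D n)⁻¹
  | (k+1) => -((D (n - (k+1)))⁻¹ * B (n - (k+1)) * Qaux W D B n k)

private lemma Qaux_zero (W : ℕ) (D B : ℕ → Matrix (Fin W) (Fin W) ℝ) (n : ℕ) :
    Qaux W D B n 0 = (D n)⁻¹ := by simp [Qaux]

private lemma Qaux_succ (W : ℕ) (D B : ℕ → Matrix (Fin W) (Fin W) ℝ) (n k : ℕ) :
    Qaux W D B n (k+1) = -((D (n - (k+1)))⁻¹ * B (n - (k+1)) * Qaux W D B n k) := by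
  simp [Qaux]

set_option maxHeartbeats 1000000 in
theorem schenker_decomposition
    (N W : ℕ) (hN : 2 ≤ N) (E : ℝ)
    (A B : Fin N → Matrix (Fin W) (Fin W) ℝ)
    (hAsym : ∀ j, (A j).IsSymm)
    (H : Matrix (Fin N × Fin W) (Fin N × Fin W) ℝ)
    (hH : ∀ (i j : Fin N) (a b : Fin W),
      H (i, a) (j, b) =
        if i = j then A i a b
        else if (i : ℕ) + 1 = (j : ℕ) then B i a b
        else if (j : ℕ) + 1 = (i : ℕ) then B j b a
        else 0)
    (D : Fin N → Matrix (Fin W) (Fin W) ℝ)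
    (hD0 : D ⟨0, by omega⟩ = A ⟨0, by omega⟩ - E • (1 : Matrix (Fin W) (Fin W) ℝ))
    (hDrec : ∀ (j : ℕ) (h : j + 1 < N),
      D ⟨j + 1, h⟩ = A ⟨j + 1, h⟩ - E • (1 : Matrix (Fin W) (Fin W) ℝ)
        - (B ⟨j, by omega⟩)ᵀ * (D ⟨j, by omega⟩)⁻¹ * B ⟨j, by omega⟩)
    (hDinv : ∀ j, IsUnit (D j))
    (hHinv : IsUnit (H - E • (1 : Matrix (Fin N × Fin W) (Fin N × Fin W) ℝ)))
    (P : Fin N → Matrix (Fin W) (Fin W) ℝ)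
    (hP0 : P ⟨0, by omega⟩ = (D ⟨0, by omega⟩)⁻¹)
    (hPrec : ∀ (j : ℕ) (h : j + 1 < N),
      P ⟨j + 1, h⟩ = P ⟨j, by omega⟩ * B ⟨j, by omega⟩ * (D ⟨j + 1, h⟩)⁻¹) :
    ∀ a b : Fin W,
      (H - E • (1 : Matrix (Fin N × Fin W) (Fin N × Fin W) ℝ))⁻¹
          (⟨0, by omega⟩, a) (⟨N - 1, by omega⟩, b) =
        ((-1 : ℝ) ^ (N - 1) • P ⟨N - 1, by omega⟩) a b := by
  intro a b
  have hN1 : N - 1 < N := by omega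
  have h0N : 0 < N := by omega
  set M := H - E • (1 : Matrix (Fin N × Fin W) (Fin N × Fin W) ℝ) with hMdef
  have hdet : ∀ j : Fin N, IsUnit (D j).det :=
    fun j => (Matrix.isUnit_iff_isUnit_det _).mp (hDinv j)
  obtain ⟨Qm, hQtop, hQrec⟩ :
      ∃ Q : ℕ → Matrix (Fin W) (Fin W) ℝ,
        Q (N-1) = (D ⟨N-1, hN1⟩)⁻¹ ∧
        ∀ (j : ℕ) (h : j + 1 < N),
          Q j = -((D ⟨j, by omega⟩)⁻¹ * B ⟨j, by omega⟩ * Q (j+1)) := by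
    refine ⟨fun j => Qaux W (fun i => if h : i < N then D ⟨i, h⟩ else 1)
        (fun i => if h : i < N then B ⟨i, h⟩ else 1) (N-1) (N-1-j), ?_, ?_⟩
    · simp only [Nat.sub_self, Qaux_zero]
      simp [hN1]
    · intro j h
      have e1 : N - 1 - j = (N - 1 - (j+1)) + 1 := by omega
      have e2 : N - 1 - (N - 1 - (j + 1) + 1) = j := by omega
      simp only []
      rw [e1, Qaux_succ, e2]
      simp [show j < N from by omega]
  -- block identities
  have hblk0 : (A ⟨0, h0N⟩ - E • (1:Matrix (Fin W) (Fin W) ℝ)) * Qm 0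
      + B ⟨0, h0N⟩ * Qm 1 = 0 := by
    have h01 : (0:ℕ) + 1 < N := by omega
    have hq := hQrec 0 h01
    norm_num at hq
    rw [hq, ← hD0]
    rw [mul_neg, ← mul_assoc, ← mul_assoc, Matrix.mul_nonsing_inv _ (hdet _), one_mul]
    exact neg_add_cancel _
  have hblkmid : ∀ (j : ℕ) (hj0 : 0 < j) (hj1 : j + 1 < N),
      (B ⟨j-1, by omega⟩)ᵀ * Qm (j-1) + (A ⟨j, by omega⟩ - E • (1:Matrix (Fin W) (Fin W) ℝ)) * Qm j
        + B ⟨j, by omega⟩ * Qm (j+1) = 0 := by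
    intro j hj0 hj1
    have hjN : j < N := by omega
    have hDj := hDrec (j-1) (by omega)
    have e : j - 1 + 1 = j := by omega
    have eF : (⟨j - 1 + 1, by omega⟩ : Fin N) = ⟨j, hjN⟩ := by
      simp only [Fin.mk.injEq]; omega
    rw [eF] at hDj
    have hq1 := hQrec (j-1) (by omega)
    have hq2 := hQrec j hj1
    simp only [e] at hq1
    have hA : A ⟨j, hjN⟩ - E • (1:Matrix (Fin W) (Fin W) ℝ)
        = D ⟨j, hjN⟩ + (B ⟨j-1, by omega⟩)ᵀ * (D ⟨j-1, by omega⟩)⁻¹ * B ⟨j-1, by omega⟩ := by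
      rw [hDj]; abel
    have h1 : (B ⟨j-1, by omega⟩)ᵀ * Qm (j-1)
        = -(((B ⟨j-1, by omega⟩)ᵀ * (D ⟨j-1, by omega⟩)⁻¹ * B ⟨j-1, by omega⟩) * Qm j) := by
      rw [hq1, mul_neg, ← mul_assoc, ← mul_assoc]
    have h2 : D ⟨j, hjN⟩ * Qm j = -(B ⟨j, hjN⟩ * Qm (j+1)) := by
      rw [hq2, mul_neg, ← mul_assoc, ← mul_assoc, Matrix.mul_nonsing_inv _ (hdet _), one_mul]
    rw [h1, hA, add_mul, h2]
    abel
  have hblkN : (B ⟨N-2, by omega⟩)ᵀ * Qm (N-2)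
      + (A ⟨N-1, hN1⟩ - E • (1:Matrix (Fin W) (Fin W) ℝ)) * Qm (N-1) = 1 := by
    have hDj := hDrec (N-2) (by omega)
    have e : N - 2 + 1 = N - 1 := by omega
    have eF : (⟨N - 2 + 1, by omega⟩ : Fin N) = ⟨N - 1, hN1⟩ := by
      simp only [Fin.mk.injEq]; omega
    rw [eF] at hDj
    have hq1 := hQrec (N-2) (by omega)
    simp only [e] at hq1
    have hA : A ⟨N-1, hN1⟩ - E • (1:Matrix (Fin W) (Fin W) ℝ)
        = D ⟨N-1, hN1⟩ + (B ⟨N-2, by omega⟩)ᵀ * (D ⟨N-2, by omega⟩)⁻¹ * B ⟨N-2, by omega⟩ := by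
      rw [hDj]; abel
    have h1 : (B ⟨N-2, by omega⟩)ᵀ * Qm (N-2)
        = -(((B ⟨N-2, by omega⟩)ᵀ * (D ⟨N-2, by omega⟩)⁻¹ * B ⟨N-2, by omega⟩) * Qm (N-1)) := by
      rw [hq1, mul_neg, ← mul_assoc, ← mul_assoc]
    rw [h1, hA, add_mul, hQtop, Matrix.mul_nonsing_inv _ (hdet _)]
    abel
  -- entry formula for M
  have hMentry : ∀ (i j : Fin N) (u v : Fin W),
      M (i, u) (j, v) =
        (if i = j then (A i - E • (1:Matrix (Fin W) (Fin W) ℝ)) u v else 0)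
        + (if (i:ℕ) + 1 = (j:ℕ) then B i u v else 0)
        + (if (j:ℕ) + 1 = (i:ℕ) then B j v u else 0) := by
    intro i j u v
    have hM1 : M (i,u) (j,v) = H (i,u) (j,v) - E * (if (i,u) = (j,v) then 1 else 0) := by
      simp [hMdef, Matrix.one_apply]
    rw [hM1, hH]
    simp only [Prod.mk.injEq]
    by_cases h : i = j
    · subst h
      simp only [if_pos rfl, true_and,
        if_neg (show ¬((i:ℕ) + 1 = (i:ℕ)) from by omega),
        Matrix.sub_apply, Matrix.smul_apply, Matrix.one_apply, smul_eq_mul]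
      split_ifs <;> ring
    · simp only [if_neg h, if_neg (show ¬(i = j ∧ u = v) from fun hc => h hc.1), zero_add]
      split_ifs <;> first | (exfalso; omega) | ring
  -- the three partial sums
  have hsum1 : ∀ (i : Fin N) (u v : Fin W),
      (∑ j : Fin N, ∑ c : Fin W,
        (if i = j then (A i - E • (1:Matrix (Fin W) (Fin W) ℝ)) u c else 0) * Qm (j:ℕ) c v)
      = ((A i - E • (1:Matrix (Fin W) (Fin W) ℝ)) * Qm (i:ℕ)) u v := by
    intro i u v
    rw [Finset.sum_eq_single i]
    · simp [Matrix.mul_apply]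
    · intro j _ hji
      refine Finset.sum_eq_zero fun c _ => ?_
      rw [if_neg (fun hc => hji hc.symm), zero_mul]
    · simp
  have hsum2 : ∀ (i : Fin N) (u v : Fin W),
      (∑ j : Fin N, ∑ c : Fin W,
        (if (i:ℕ) + 1 = (j:ℕ) then B i u c else 0) * Qm (j:ℕ) c v)
      = if h : (i:ℕ) + 1 < N then (B i * Qm ((i:ℕ)+1)) u v else 0 := by
    intro i u v
    by_cases h : (i:ℕ) + 1 < N
    · rw [dif_pos h, Finset.sum_eq_single (⟨(i:ℕ)+1, h⟩ : Fin N)]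
      · simp [Matrix.mul_apply]
      · intro j _ hji
        refine Finset.sum_eq_zero fun c _ => ?_
        rw [if_neg (fun hc => hji (Fin.ext hc.symm)), zero_mul]
      · simp
    · rw [dif_neg h]
      refine Finset.sum_eq_zero fun j _ => Finset.sum_eq_zero fun c _ => ?_
      have := j.isLt
      rw [if_neg (by omega), zero_mul]
  have hsum3 : ∀ (i : Fin N) (u v : Fin W),
      (∑ j : Fin N, ∑ c : Fin W,
        (if (j:ℕ) + 1 = (i:ℕ) then B j c u else 0) * Qm (j:ℕ) c v)
      = if h : 0 < (i:ℕ) then ((B ⟨(i:ℕ)-1, by omega⟩)ᵀ * Qm ((i:ℕ)-1)) u v else 0 := by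
    intro i u v
    by_cases h : 0 < (i:ℕ)
    · have hlt : (i:ℕ) - 1 < N := by have := i.isLt; omega
      rw [dif_pos h, Finset.sum_eq_single (⟨(i:ℕ)-1, hlt⟩ : Fin N)]
      · simp [Matrix.mul_apply, Matrix.transpose_apply,
          show (i:ℕ) - 1 + 1 = (i:ℕ) from by omega]
      · intro j _ hji
        refine Finset.sum_eq_zero fun c _ => ?_
        have hne : ¬((j:ℕ) + 1 = (i:ℕ)) := by
          intro hc
          refine hji (Fin.ext ?_)
          show (j:ℕ) = (i:ℕ) - 1
          omega
        rw [if_neg hne, zero_mul]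
      · simp
    · rw [dif_neg h]
      refine Finset.sum_eq_zero fun j _ => Finset.sum_eq_zero fun c _ => ?_
      rw [if_neg (by omega), zero_mul]
  -- the column matrix and the unit column
  set X : Matrix (Fin N × Fin W) (Fin W) ℝ :=
    Matrix.of (fun p c => Qm (p.1 : ℕ) p.2 c) with hX
  set Ecl : Matrix (Fin N × Fin W) (Fin W) ℝ :=
    Matrix.of (fun p c => if (p.1 : ℕ) = N - 1 then (if p.2 = c then (1:ℝ) else 0) else 0)
    with hE
  have hMX : M * X = Ecl := by
    ext ⟨i, u⟩ v
    rw [Matrix.mul_apply, Fintype.sum_prod_type]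
    simp only [hX, hE, Matrix.of_apply]
    simp only [hMentry, add_mul]
    simp only [Finset.sum_add_distrib]
    rw [hsum1 i u v, hsum2 i u v, hsum3 i u v]
    have hiN := i.isLt
    by_cases h0 : (i:ℕ) = 0
    · have hi : i = ⟨0, h0N⟩ := Fin.ext h0
      subst hi
      rw [dif_pos (show (0:ℕ) + 1 < N by omega), dif_neg (by simp), if_neg (by simp; omega)]
      have hb := congrFun (congrFun hblk0 u) v
      simp only [Matrix.add_apply, Matrix.zero_apply] at hb
      simpa using hb
    · by_cases hN' : (i:ℕ) = N - 1
      · have hi : i = ⟨N-1, hN1⟩ := Fin.ext hN'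
        subst hi
        rw [dif_neg (by simp; omega), dif_pos (by simp; omega), if_pos (by simp)]
        have hb := congrFun (congrFun hblkN u) v
        simp only [Matrix.add_apply, Matrix.one_apply] at hb
        simp only [show ((⟨N-1, hN1⟩ : Fin N) : ℕ) = N - 1 from rfl]
        have eB : (⟨N - 1 - 1, by omega⟩ : Fin N) = ⟨N - 2, by omega⟩ := by
          simp only [Fin.mk.injEq]; omega
        rw [eB, show N - 1 - 1 = N - 2 from by omega, add_zero, ← hb]
        ring
      · have hlt : (i:ℕ) + 1 < N := by omega
        have hpos : 0 < (i:ℕ) := by omega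
        rw [dif_pos hlt, dif_pos hpos, if_neg hN']
        have hb := congrFun (congrFun (hblkmid (i:ℕ) hpos hlt) u) v
        simp only [Matrix.add_apply, Matrix.zero_apply, Fin.eta] at hb
        rw [← hb]
        ring
  -- invert
  have hdetM : IsUnit M.det := (Matrix.isUnit_iff_isUnit_det M).mp hHinv
  have hXeq : X = M⁻¹ * Ecl := by
    calc X = 1 * X := (Matrix.one_mul X).symm
    _ = (M⁻¹ * M) * X := by rw [Matrix.nonsing_inv_mul M hdetM]
    _ = M⁻¹ * (M * X) := Matrix.mul_assoc _ _ _
    _ = M⁻¹ * Ecl := by rw [hMX]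
  have hfin : M⁻¹ ((⟨0, h0N⟩ : Fin N), a) ((⟨N-1, hN1⟩ : Fin N), b) = Qm 0 a b := by
    have h1 : X ((⟨0, h0N⟩ : Fin N), a) b = Qm 0 a b := by simp [hX]
    rw [hXeq] at h1
    rw [← h1, Matrix.mul_apply]
    rw [Finset.sum_eq_single ((⟨N-1, hN1⟩ : Fin N), b)]
    · simp [hE]
    · intro q _ hq
      rcases q with ⟨j, c⟩
      have : Ecl (j, c) b = 0 := by
        simp only [hE, Matrix.of_apply]
        by_cases h2 : (j:ℕ) = N - 1
        · rw [if_pos h2, if_neg]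
          intro h3
          exact hq (by rw [h3]; exact congrArg (fun x => (x, b)) (Fin.ext h2))
        · rw [if_neg h2]
      rw [this, mul_zero]
    · simp
  -- relate Qm 0 to P
  have hS : ∀ k : ℕ, k ≤ N - 1 →
      P ⟨N-1-k, by omega⟩ * D ⟨N-1-k, by omega⟩ * Qm (N-1-k)
        = ((-1:ℝ)^k) • P ⟨N-1, hN1⟩ := by
    intro k
    induction k with
    | zero =>
      intro _
      simp only [Nat.sub_zero]
      rw [hQtop, mul_assoc, Matrix.mul_nonsing_inv _ (hdet _), mul_one, pow_zero, one_smul]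
    | succ k ih =>
      intro hk1
      have ihk := ih (by omega)
      have hj1 : N - 1 - (k+1) + 1 < N := by omega
      have eF : (⟨N-1-k, by omega⟩ : Fin N) = ⟨N - 1 - (k+1) + 1, hj1⟩ := by
        simp only [Fin.mk.injEq]; omega
      rw [eF, show N - 1 - k = N - 1 - (k+1) + 1 from by omega] at ihk
      have hq := hQrec (N-1-(k+1)) hj1
      have hp := hPrec (N-1-(k+1)) hj1
      calc P ⟨N-1-(k+1), by omega⟩ * D ⟨N-1-(k+1), by omega⟩ * Qm (N-1-(k+1))
          = -(P ⟨N-1-(k+1), by omega⟩ *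
              (D ⟨N-1-(k+1), by omega⟩ * (D ⟨N-1-(k+1), by omega⟩)⁻¹) *
              (B ⟨N-1-(k+1), by omega⟩ * Qm (N-1-(k+1)+1))) := by
            rw [hq, mul_neg]
            congr 1
            simp only [← mul_assoc]
        _ = -(P ⟨N-1-(k+1), by omega⟩ * B ⟨N-1-(k+1), by omega⟩ * Qm (N-1-(k+1)+1)) := by
            rw [Matrix.mul_nonsing_inv _ (hdet _), mul_one]
            congr 1
            simp only [← mul_assoc]
        _ = -(P ⟨N-1-(k+1), by omega⟩ * B ⟨N-1-(k+1), by omega⟩ *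
              (((D ⟨N-1-(k+1)+1, hj1⟩)⁻¹ * D ⟨N-1-(k+1)+1, hj1⟩) * Qm (N-1-(k+1)+1))) := by
            rw [Matrix.nonsing_inv_mul _ (hdet _), one_mul]
        _ = -(P ⟨N-1-(k+1)+1, hj1⟩ * D ⟨N-1-(k+1)+1, hj1⟩ * Qm (N-1-(k+1)+1)) := by
            rw [hp]
            congr 1
            simp only [← mul_assoc]
        _ = -(((-1:ℝ)^k) • P ⟨N-1, hN1⟩) := by rw [ihk]
        _ = ((-1:ℝ)^(k+1)) • P ⟨N-1, hN1⟩ := by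
            rw [pow_succ, mul_neg_one, neg_smul]
  have hQ0 : Qm 0 = ((-1:ℝ)^(N-1)) • P ⟨N-1, hN1⟩ := by
    have hs := hS (N-1) le_rfl
    have eF : (⟨N-1-(N-1), by omega⟩ : Fin N) = ⟨0, h0N⟩ := by
      simp only [Fin.mk.injEq]; omega
    rw [eF, Nat.sub_self] at hs
    rw [hP0, Matrix.nonsing_inv_mul _ (hdet _), one_mul] at hs
    exact hs
  rw [hfin, hQ0]
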